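/- An increasing union of pseudoconvex open subsets of ℂⁿ is pseudoconvex: if Ω_j ⊂ Ω_{j+1} are pseudoconvex open sets and Ω = ⋃_j Ω_j, then Ω is pseudoconvex. -/

import Mathlib

open Metric MeasureTheory

noncomputable section

/-- A function `u` is plurisubharmonic on a set `s` in a complex normed space:
upper semicontinuous and satisfying the sub-mean value inequality on every
closed complex disc contained in `s`. -/
def PSHOn {E : Type*} [NormedAddCommGroup E] [NormedSpace ℂ E]
    (u : E → ℝ) (s : Set E) : Prop :=
  UpperSemicontinuousOn u s ∧
  ∀ a ∈ s, ∀ b : E, ∀ r : ℝ, 0 < r →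
    (∀ t : ℂ, ‖t‖ ≤ r → a + t • b ∈ s) →
    u a ≤ (1 / (2 * Real.pi)) *
      ∫ θ in (0:ℝ)..(2 * Real.pi), u (a + ((r : ℂ) * Complex.exp (θ * Complex.I)) • b)

/-- An open set `D` is pseudoconvex if `-log dist(·, Dᶜ)` is plurisubharmonic on `D`. -/
def Pseudoconvex {E : Type*} [NormedAddCommGroup E] [NormedSpace ℂ E]
    (D : Set E) : Prop :=
  PSHOn (fun z => -Real.log (Metric.infDist z Dᶜ)) D

open Filter Topology in
lemma tendsto_infDist_iInter_aux {E : Type*} [MetricSpace E] [ProperSpace E]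
    (A : ℕ → Set E) (hcl : ∀ k, IsClosed (A k)) (hanti : Antitone A)
    (hne : (⋂ k, A k).Nonempty) (z : E) :
    Tendsto (fun k => infDist z (A k)) atTop (𝓝 (infDist z (⋂ k, A k))) := by
  set d := infDist z (⋂ k, A k) with hd
  have hsub : ∀ k, (⋂ i, A i) ⊆ A k := fun k => Set.iInter_subset _ k
  have hAk_ne : ∀ k, (A k).Nonempty := fun k => hne.mono (hsub k)
  have hle : ∀ k, infDist z (A k) ≤ d := fun k => infDist_le_infDist_of_subset (hsub k) hne
  have hmono : Monotone fun k => infDist z (A k) := fun i j hij =>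
    infDist_le_infDist_of_subset (hanti hij) (hAk_ne j)
  have hbdd : BddAbove (Set.range fun k => infDist z (A k)) :=
    ⟨d, by rintro _ ⟨k, rfl⟩; exact hle k⟩
  have htend := tendsto_atTop_ciSup hmono hbdd
  set L := ⨆ k, infDist z (A k) with hL
  have hLd : L ≤ d := ciSup_le hle
  choose w hw hdw using fun k => (hcl k).exists_infDist_eq_dist (hAk_ne k) z
  have hwball : ∀ k, w k ∈ closedBall z d := by
    intro k
    rw [mem_closedBall, dist_comm, ← hdw k]
    exact hle k
  obtain ⟨wlim, hwmem, φ, hφ, htend'⟩ :=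
    (isCompact_closedBall z d).tendsto_subseq hwball
  have hwinf : wlim ∈ ⋂ k, A k := by
    refine Set.mem_iInter.2 fun k => ?_
    refine (hcl k).mem_of_tendsto htend' ?_
    filter_upwards [eventually_ge_atTop k] with i hi
    exact hanti (le_trans hi hφ.le_apply) (hw (φ i))
  have h1 : Tendsto (fun i => dist z (w (φ i))) atTop (𝓝 (dist z wlim)) :=
    (continuous_dist.comp (continuous_const.prodMk continuous_id)).continuousAt.tendsto.comp
      htend' |>.congr (fun i => rfl)
  have h2 : Tendsto (fun i => dist z (w (φ i))) atTop (𝓝 L) := by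
    have := htend.comp hφ.tendsto_atTop
    simpa only [Function.comp_def, hdw] using this
  have hdL : dist z wlim = L := tendsto_nhds_unique h1 h2
  have hdle : d ≤ L := hdL ▸ infDist_le_dist_of_mem hwinf
  have : L = d := le_antisymm hLd hdle
  rwa [this] at htend

open Filter Topology in
/-- An increasing union of pseudoconvex open sets is pseudoconvex. -/
theorem increasing_union_pseudoconvex {n : ℕ}
    (Ω : ℕ → Set (EuclideanSpace ℂ (Fin n)))
    (hopen : ∀ j, IsOpen (Ω j))
    (hincr : ∀ j, Ω j ⊆ Ω (j + 1))
    (hpc : ∀ j, Pseudoconvex (Ω j)) :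
    Pseudoconvex (⋃ j, Ω j) := by
  unfold Pseudoconvex PSHOn
  by_cases hcompl : (⋃ j, Ω j)ᶜ = ∅
  · rw [hcompl]
    simp only [Metric.infDist_empty, Real.log_zero, neg_zero]
    refine ⟨fun z _ => ?_, fun a _ b r hr _ => by simp⟩
    · exact (upperSemicontinuousWithinAt_const)
  -- nontrivial case
  have hne : (⋃ j, Ω j)ᶜ.Nonempty := Set.nonempty_iff_ne_empty.2 hcompl
  have hC : (⋃ j, Ω j)ᶜ = ⋂ j, (Ω j)ᶜ := by rw [Set.compl_iUnion]
  have hclosed : IsClosed (⋃ j, Ω j)ᶜ := (isOpen_iUnion hopen).isClosed_compl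
  have hsubk : ∀ k, (⋃ j, Ω j)ᶜ ⊆ (Ω k)ᶜ := fun k =>
    Set.compl_subset_compl.2 (Set.subset_iUnion Ω k)
  have hkne : ∀ k, ((Ω k)ᶜ).Nonempty := fun k => hne.mono (hsubk k)
  have hmonoΩ : Monotone Ω := monotone_nat_of_le_succ hincr
  -- positivity of distances inside open sets
  have hpos : ∀ z ∈ ⋃ j, Ω j, 0 < infDist z (⋃ j, Ω j)ᶜ := fun z hz =>
    (hclosed.notMem_iff_infDist_pos hne).1 (by simpa using hz)
  have hposk : ∀ k, ∀ z ∈ Ω k, 0 < infDist z (Ω k)ᶜ := fun k z hz =>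
    (((hopen k).isClosed_compl).notMem_iff_infDist_pos (hkne k)).1 (by simpa using hz)
  constructor
  · -- upper semicontinuity: the function is in fact continuous on the union
    intro z hz
    refine ContinuousWithinAt.upperSemicontinuousWithinAt ?_
    have h1 : ContinuousAt (fun y : EuclideanSpace ℂ (Fin n) => infDist y (⋃ j, Ω j)ᶜ) z :=
      (continuous_infDist_pt _).continuousAt
    have h2 : ContinuousAt Real.log (infDist z (⋃ j, Ω j)ᶜ) :=
      Real.continuousAt_log (hpos z hz).ne'
    have h3 := ContinuousAt.comp (g := Real.log)
      (f := fun y : EuclideanSpace ℂ (Fin n) => infDist y (⋃ j, Ω j)ᶜ) h2 h1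
    exact (h3.neg).continuousWithinAt
  · intro a ha b r hr hdisc
    -- the closed disc is compact, hence inside some Ω J
    set p : ℝ → EuclideanSpace ℂ (Fin n) :=
      fun θ => a + ((r : ℂ) * Complex.exp (θ * Complex.I)) • b with hp
    set D : Set (EuclideanSpace ℂ (Fin n)) :=
      (fun t : ℂ => a + t • b) '' Metric.closedBall 0 r with hD
    have hDcomp : IsCompact D :=
      (isCompact_closedBall (0:ℂ) r).image (by fun_prop)
    have hDsub : D ⊆ ⋃ j, Ω j := by
      rintro _ ⟨t, ht, rfl⟩
      exact hdisc t (by simpa [mem_closedBall, dist_zero_right] using ht)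
    obtain ⟨J, hJ⟩ := hDcomp.elim_directed_cover Ω hopen hDsub (hmonoΩ.directed_le)
    have haD : a ∈ D := ⟨0, by simp [hr.le], by simp⟩
    have hDk : ∀ k, J ≤ k → D ⊆ Ω k := fun k hk => hJ.trans (hmonoΩ hk)
    have hpθ : ∀ θ : ℝ, p θ ∈ D := by
      intro θ
      refine ⟨(r : ℂ) * Complex.exp (θ * Complex.I), ?_, rfl⟩
      simp [mem_closedBall, dist_zero_right, Complex.norm_exp, abs_of_pos hr]
    -- notation for the integrands
    set F : ℕ → ℝ → ℝ := fun k θ => -Real.log (infDist (p θ) (Ω k)ᶜ) with hF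
    set f : ℝ → ℝ := fun θ => -Real.log (infDist (p θ) (⋃ j, Ω j)ᶜ) with hf
    have hpcont : Continuous p := by fun_prop
    have hcontk : ∀ k, J ≤ k → Continuous (F k) := by
      intro k hk
      refine Continuous.neg ?_
      refine Real.continuousOn_log.comp_continuous
        ((continuous_infDist_pt _).comp hpcont) (fun θ => ?_)
      exact (hposk k _ (hDk k hk (hpθ θ))).ne'
    have hcontf : Continuous f := by
      refine Continuous.neg ?_
      refine Real.continuousOn_log.comp_continuous
        ((continuous_infDist_pt _).comp hpcont) (fun θ => ?_)
      exact (hpos _ (hDsub (hpθ θ))).ne'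
    -- pointwise monotone bounds
    have hfF : ∀ k (hk : J ≤ k) θ, f θ ≤ F k θ := by
      intro k hk θ
      have h1 : infDist (p θ) (Ω k)ᶜ ≤ infDist (p θ) (⋃ j, Ω j)ᶜ :=
        infDist_le_infDist_of_subset (hsubk k) hne
      have h2 : 0 < infDist (p θ) (Ω k)ᶜ := hposk k _ (hDk k hk (hpθ θ))
      exact neg_le_neg (Real.log_le_log h2 h1)
    have hFJ : ∀ k (hk : J ≤ k) θ, F k θ ≤ F J θ := by
      intro k hk θ
      have h1 : infDist (p θ) (Ω J)ᶜ ≤ infDist (p θ) (Ω k)ᶜ :=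
        infDist_le_infDist_of_subset (Set.compl_subset_compl.2 (hmonoΩ hk)) (hkne k)
      have h2 : 0 < infDist (p θ) (Ω J)ᶜ := hposk J _ (hJ (hpθ θ))
      exact neg_le_neg (Real.log_le_log h2 h1)
    -- convergence of integrals via dominated convergence
    have hlim : ∀ θ : ℝ, Tendsto (fun k => F k θ) atTop (𝓝 (f θ)) := by
      intro θ
      have hinf : Tendsto (fun k => infDist (p θ) (Ω k)ᶜ) atTop
          (𝓝 (infDist (p θ) (⋃ j, Ω j)ᶜ)) := by
        rw [hC]
        exact tendsto_infDist_iInter_aux (fun k => (Ω k)ᶜ)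
          (fun k => (hopen k).isClosed_compl)
          (fun i j hij => Set.compl_subset_compl.2 (hmonoΩ hij))
          (hC ▸ hne) (p θ)
      have hposθ := hpos _ (hDsub (hpθ θ))
      exact (((Real.continuousAt_log hposθ.ne').tendsto).comp hinf).neg
    have hint : Tendsto (fun k => ∫ θ in (0:ℝ)..(2 * Real.pi), F k θ) atTop
        (𝓝 (∫ θ in (0:ℝ)..(2 * Real.pi), f θ)) := by
      refine intervalIntegral.tendsto_integral_filter_of_dominated_convergence
        (fun θ => max |f θ| |F J θ|) ?_ ?_ ?_ ?_
      · filter_upwards [eventually_ge_atTop J] with k hk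
        exact ((hcontk k hk).aestronglyMeasurable).restrict
      · filter_upwards [eventually_ge_atTop J] with k hk
        refine Eventually.of_forall fun θ _ => ?_
        exact abs_le_max_abs_abs (hfF k hk θ) (hFJ k hk θ)
      · exact ((hcontf.abs.max ((hcontk J le_rfl).abs)).intervalIntegrable _ _)
      · exact Eventually.of_forall fun θ _ => hlim θ
    -- conclude
    have hineq : ∀ k, J ≤ k →
        -Real.log (infDist a (⋃ j, Ω j)ᶜ) ≤
          (1 / (2 * Real.pi)) * ∫ θ in (0:ℝ)..(2 * Real.pi), F k θ := by
      intro k hk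
      have haΩk : a ∈ Ω k := hDk k hk haD
      have hdisck : ∀ t : ℂ, ‖t‖ ≤ r → a + t • b ∈ Ω k := fun t ht =>
        hDk k hk ⟨t, by simpa [mem_closedBall, dist_zero_right] using ht, rfl⟩
      have hmean := (hpc k).2 a haΩk b r hr hdisck
      have hua : -Real.log (infDist a (⋃ j, Ω j)ᶜ) ≤ -Real.log (infDist a (Ω k)ᶜ) := by
        have h1 : infDist a (Ω k)ᶜ ≤ infDist a (⋃ j, Ω j)ᶜ :=
          infDist_le_infDist_of_subset (hsubk k) hne
        exact neg_le_neg (Real.log_le_log (hposk k a haΩk) h1)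
      exact hua.trans hmean
    have hfin : Tendsto (fun k => (1 / (2 * Real.pi)) * ∫ θ in (0:ℝ)..(2 * Real.pi), F k θ)
        atTop (𝓝 ((1 / (2 * Real.pi)) * ∫ θ in (0:ℝ)..(2 * Real.pi), f θ)) :=
      hint.const_mul _
    exact ge_of_tendsto hfin (by
      filter_upwards [eventually_ge_atTop J] with k hk using hineq k hk)
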